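/- Let h be a homogeneous harmonic polynomial of degree d in n variables with complex coefficients (i.e. Δh = 0), and let s ≥ 0 and p ≥ 1 be integers. Then Δ^p(|x|^{2s+2p} h(x)) = d_p(s,d) |x|^{2s} h(x), where d_p(s,m) := 2^p (s+p)(s+p-1)⋯(s+1) · (2s+2p-2+n+2m)(2s+2p-4+n+2m)⋯(2s+n+2m), i.e. d_p(s,m) = 2^p ∏_{i=1}^{p}(s+i) · ∏_{i=0}^{p-1}(2s+n+2m+2i), and |x|² = x_1² + ⋯ + x_n². -/

import Mathlib

open MvPolynomial MeasureTheory Filter Matrix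

noncomputable section

/-- Evaluation of a complex-coefficient polynomial at a real point of `ℝⁿ`. -/
def evalR {n : ℕ} (P : MvPolynomial (Fin n) ℂ) (x : Fin n → ℝ) : ℂ :=
  MvPolynomial.eval (fun i => (x i : ℂ)) P

/-- The real Fischer inner product `⟨f,g⟩_rF = ∫_{ℝⁿ} f(x) conj (g(x)) e^{-|x|²} dx`. -/
def rFInner {n : ℕ} (f g : MvPolynomial (Fin n) ℂ) : ℂ :=
  ∫ x : Fin n → ℝ, evalR f x * (starRingEnd ℂ) (evalR g x) * Real.exp (-(∑ i, x i ^ 2))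

/-- The real Fischer norm `‖f‖_rF = ⟨f,f⟩_rF^{1/2}`. -/
def rFNorm {n : ℕ} (f : MvPolynomial (Fin n) ℂ) : ℝ :=
  Real.sqrt (∫ x : Fin n → ℝ, ‖evalR f x‖ ^ 2 * Real.exp (-(∑ i, x i ^ 2)))

/-- The (complex) Fischer inner product `⟨f,g⟩_F = ∑_α α! c_α conj(d_α)`. -/
def FInner {n : ℕ} (f g : MvPolynomial (Fin n) ℂ) : ℂ :=
  ∑ α ∈ f.support ∪ g.support,
    (∏ i, ((α i).factorial : ℂ)) * MvPolynomial.coeff α f *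
      (starRingEnd ℂ) (MvPolynomial.coeff α g)

/-- The (complex) Fischer norm. -/
def FNorm {n : ℕ} (f : MvPolynomial (Fin n) ℂ) : ℝ :=
  Real.sqrt (FInner f f).re

/-- The Laplace operator `Δ = ∑ ∂²/∂xⱼ²` on polynomials. -/
def lapP {n : ℕ} (f : MvPolynomial (Fin n) ℂ) : MvPolynomial (Fin n) ℂ :=
  ∑ i, MvPolynomial.pderiv i (MvPolynomial.pderiv i f)

/-- The differential operator `D^α = ∂^{|α|}/∂x^α` on polynomials. -/
def DP {n : ℕ} (α : Fin n → ℕ) (f : MvPolynomial (Fin n) ℂ) : MvPolynomial (Fin n) ℂ :=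
  (List.finRange n).foldl (fun g i => (fun h => MvPolynomial.pderiv i h)^[α i] g) f

/-- The constant coefficient operator `Q(D)` associated to a polynomial `Q = ∑ c_β x^β`. -/
def QD {n : ℕ} (Q f : MvPolynomial (Fin n) ℂ) : MvPolynomial (Fin n) ℂ :=
  ∑ β ∈ Q.support, MvPolynomial.coeff β Q • DP (fun i => β i) f

/-- The polynomial `|x|² = x₁² + ⋯ + xₙ²`. -/
def radSq (n : ℕ) : MvPolynomial (Fin n) ℂ :=
  ∑ i : Fin n, (MvPolynomial.X i) ^ 2

/-- `Ii m = ∫₀^∞ e^{-r²} r^m dr`. -/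
def Ii (m : ℕ) : ℝ := ∫ r in Set.Ioi (0 : ℝ), Real.exp (-r ^ 2) * r ^ m

/-- `e_{p,m} = 2^p p! (2m+n)(2m+n+2)⋯(2m+n+2(p-1))` (for `n` variables). -/
def epm (n p m : ℕ) : ℕ :=
  2 ^ p * Nat.factorial p * ∏ i ∈ Finset.range p, (2 * m + n + 2 * i)

/-- The partial derivative `∂/∂xᵢ` of a function on `ℝⁿ`. -/
def pdF {n : ℕ} (i : Fin n) (f : (Fin n → ℝ) → ℂ) : (Fin n → ℝ) → ℂ :=
  fun x => fderiv ℝ f x (Pi.single i 1)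

/-- The differential operator `D^α` on functions on `ℝⁿ`. -/
def DF {n : ℕ} (α : Fin n → ℕ) (f : (Fin n → ℝ) → ℂ) : (Fin n → ℝ) → ℂ :=
  (List.finRange n).foldl (fun g i => (pdF i)^[α i] g) f

/-- The Laplace operator `Δ` on functions on `ℝⁿ`. -/
def lapF {n : ℕ} (f : (Fin n → ℝ) → ℂ) : (Fin n → ℝ) → ℂ :=
  fun x => ∑ i, pdF i (pdF i f) x

/-- The open euclidean ball `B_R = {x ∈ ℝⁿ : |x| < R}`. -/
def euclBall (n : ℕ) (R : ℝ) : Set (Fin n → ℝ) := {x | ∑ i, x i ^ 2 < R ^ 2}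

/-- The homogeneous part of degree `m` of the Taylor series of `f` at `0`:
`f_m(x) = ∑_{|α|=m} (1/α!) (∂^α f)(0) x^α`. -/
def homPart {n : ℕ} (f : (Fin n → ℝ) → ℂ) (m : ℕ) (x : Fin n → ℝ) : ℂ :=
  ∑ α ∈ Finset.Nat.antidiagonalTuple n m,
    (∏ i, ((α i).factorial : ℂ))⁻¹ * DF α f 0 * ∏ i, (x i : ℂ) ^ (α i)

/-- Membership in `A(B_R)`: infinitely differentiable on `B_R`, and the homogeneous Taylor
series converges absolutely and uniformly to `f` on every compact subset of `B_R`. -/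
def MemA (n : ℕ) (R : ℝ) (f : (Fin n → ℝ) → ℂ) : Prop :=
  ContDiffOn ℝ ⊤ f (euclBall n R) ∧
  ∀ K : Set (Fin n → ℝ), K ⊆ euclBall n R → IsCompact K →
    TendstoUniformlyOn (fun N x => ∑ m ∈ Finset.range N, homPart f m x) f atTop K ∧
    ∃ g : (Fin n → ℝ) → ℝ,
      TendstoUniformlyOn (fun N x => ∑ m ∈ Finset.range N, ‖homPart f m x‖)
        g atTop K

/-- The operator `Q(D)` on functions on `ℝⁿ`. -/
def QDF {n : ℕ} (Q : MvPolynomial (Fin n) ℂ) (u : (Fin n → ℝ) → ℂ) : (Fin n → ℝ) → ℂ :=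
  fun x => ∑ β ∈ Q.support, MvPolynomial.coeff β Q * DF (fun i => β i) u x

/-- The operator `L = Δ^p + ∑_{|α| ≤ k₀} a_α(x) D^α` on functions on `ℝⁿ`. -/
def Lop {n : ℕ} (p k₀ : ℕ) (a : (Fin n → ℕ) → (Fin n → ℝ) → ℂ)
    (u : (Fin n → ℝ) → ℂ) : (Fin n → ℝ) → ℂ :=
  fun x => (lapF^[p] u) x +
    ∑ l ∈ Finset.range (k₀ + 1), ∑ α ∈ Finset.Nat.antidiagonalTuple n l, a α x * DF α u x

/-- The operator `L = Q(D) + ∑_{|α| ≤ k₀} a_α(x) D^α` on functions on `ℝⁿ`. -/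
def LopQ {n : ℕ} (Q : MvPolynomial (Fin n) ℂ) (k₀ : ℕ) (a : (Fin n → ℕ) → (Fin n → ℝ) → ℂ)
    (u : (Fin n → ℝ) → ℂ) : (Fin n → ℝ) → ℂ :=
  fun x => QDF Q u x +
    ∑ l ∈ Finset.range (k₀ + 1), ∑ α ∈ Finset.Nat.antidiagonalTuple n l, a α x * DF α u x

/-- The complex partial derivative `∂/∂zᵢ` of a function on `ℂⁿ`. -/
def pdC {n : ℕ} (i : Fin n) (f : (Fin n → ℂ) → ℂ) : (Fin n → ℂ) → ℂ :=
  fun z => fderiv ℂ f z (Pi.single i 1)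

/-- The differential operator `D^α` on functions on `ℂⁿ`. -/
def DFc {n : ℕ} (α : Fin n → ℕ) (f : (Fin n → ℂ) → ℂ) : (Fin n → ℂ) → ℂ :=
  (List.finRange n).foldl (fun g i => (pdC i)^[α i] g) f

/-- The operator `B(D) = ∑_{i,j} B_{ij} ∂_i ∂_j` on functions on `ℂⁿ`, for the quadratic
form `B(ζ) = ζᵗBζ`. -/
def BDop {n : ℕ} (B : Matrix (Fin n) (Fin n) ℂ) (f : (Fin n → ℂ) → ℂ) :
    (Fin n → ℂ) → ℂ :=
  fun z => ∑ i, ∑ j, B i j * pdC i (pdC j f) z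

/-- The operator `L = (B(D))^p + ∑_{|α| ≤ p} a_α(z) D^α` on functions on `ℂⁿ`. -/
def LC {n : ℕ} (B : Matrix (Fin n) (Fin n) ℂ) (p : ℕ)
    (a : (Fin n → ℕ) → (Fin n → ℂ) → ℂ) (u : (Fin n → ℂ) → ℂ) : (Fin n → ℂ) → ℂ :=
  fun z => ((BDop B)^[p] u) z +
    ∑ l ∈ Finset.range (p + 1), ∑ α ∈ Finset.Nat.antidiagonalTuple n l, a α z * DFc α u z

end

section eqeigenAux
variable {n : ℕ}

lemma X_mul_pderiv_monomial (i : Fin n) (m : Fin n →₀ ℕ) (c : ℂ) :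
    X i * pderiv i (monomial m c) = monomial m ((m i : ℂ) * c) := by
  rw [pderiv_monomial, X, monomial_mul]
  rcases Nat.eq_zero_or_pos (m i) with h0 | h1
  · simp [h0]
  · rw [add_comm, tsub_add_cancel_of_le (Finsupp.single_le_iff.mpr h1)]
    ring_nf

lemma euler {d : ℕ} (h : MvPolynomial (Fin n) ℂ) (hh : h.IsHomogeneous d) :
    ∑ i : Fin n, X i * pderiv i h = (d : MvPolynomial (Fin n) ℂ) * h := by
  have key : ∀ m ∈ h.support, ∑ i : Fin n, X i * pderiv i (monomial m (coeff m h))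
      = (d : MvPolynomial (Fin n) ℂ) * monomial m (coeff m h) := by
    intro m hm
    have hdeg : (∑ i : Fin n, m i) = d := by
      have h1 := hh (mem_support_iff.mp hm)
      have h2 : m.degree = ∑ i : Fin n, m i :=
        Finset.sum_subset (Finset.subset_univ _)
          (fun i _ hi => Finsupp.notMem_support_iff.mp hi)
      rw [← h2, Finsupp.degree_eq_weight_one]
      exact h1
    simp_rw [_root_.X_mul_pderiv_monomial]
    rw [← map_sum, ← Finset.sum_mul]
    rw [show (∑ i : Fin n, ((m i : ℂ))) = (d : ℂ) by push_cast [← hdeg]; ring]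
    rw [show ((d : MvPolynomial (Fin n) ℂ)) = C (d:ℂ) by rw [map_natCast]]
    rw [C_mul_monomial]
  have hrep := support_sum_monomial_coeff h
  calc ∑ i : Fin n, X i * pderiv i h
      = ∑ i : Fin n, X i * pderiv i (∑ m ∈ h.support, monomial m (coeff m h)) := by rw [hrep]
    _ = ∑ i : Fin n, ∑ m ∈ h.support, X i * pderiv i (monomial m (coeff m h)) := by
        simp_rw [map_sum, Finset.mul_sum]
    _ = ∑ m ∈ h.support, ∑ i : Fin n, X i * pderiv i (monomial m (coeff m h)) :=
        Finset.sum_comm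
    _ = ∑ m ∈ h.support, (d : MvPolynomial (Fin n) ℂ) * monomial m (coeff m h) :=
        Finset.sum_congr rfl key
    _ = _ := by rw [← Finset.mul_sum, hrep]

lemma pd_radSq (i : Fin n) : pderiv i (radSq n) = 2 * X i := by
  unfold radSq
  rw [map_sum, Finset.sum_eq_single i]
  · rw [pderiv_pow, pderiv_X_self]; ring_nf
  · intro j _ hj; rw [pderiv_pow, pderiv_X_of_ne hj]; ring
  · intro hi; exact absurd (Finset.mem_univ i) hi

lemma pd_natCast (i : Fin n) (k : ℕ) :
    pderiv i ((k : MvPolynomial (Fin n) ℂ)) = 0 := by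
  rw [← map_natCast (C : ℂ →+* MvPolynomial (Fin n) ℂ), pderiv_C]

lemma pd_two (i : Fin n) : pderiv i (2 : MvPolynomial (Fin n) ℂ) = 0 := by
  rw [show (2 : MvPolynomial (Fin n) ℂ) = C 2 from (map_ofNat C 2).symm, pderiv_C]

lemma sumXX : ∑ i : Fin n, X i * X i = radSq n :=
  Finset.sum_congr rfl (fun i _ => (sq (X i)).symm)

lemma lapC (c : ℂ) (g : MvPolynomial (Fin n) ℂ) : lapP (C c * g) = C c * lapP g := by
  unfold lapP
  simp_rw [pderiv_C_mul, Finset.mul_sum]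

lemma lap_iter_C (p : ℕ) (c : ℂ) (g : MvPolynomial (Fin n) ℂ) :
    lapP^[p] (C c * g) = C c * lapP^[p] g := by
  induction p generalizing g with
  | zero => rfl
  | succ p ih => rw [Function.iterate_succ_apply, Function.iterate_succ_apply, lapC, ih]

lemma step {d : ℕ} (h : MvPolynomial (Fin n) ℂ)
    (hhom : h.IsHomogeneous d) (hharm : lapP h = 0) (t : ℕ) :
    lapP (radSq n ^ (t+1) * h) =
      C ((2*(t+1)*(2*t+n+2*d) : ℕ) : ℂ) * (radSq n ^ t * h) := by
  have key : ∀ i ∈ Finset.univ, pderiv i (pderiv i (radSq n ^ (t+1) * h)) =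
      4*(t:MvPolynomial (Fin n) ℂ)*((t:MvPolynomial (Fin n) ℂ)+1)
        * ((X i * X i) * (radSq n ^(t-1) * h))
      + 2*((t:MvPolynomial (Fin n) ℂ)+1) * (radSq n ^t * h)
      + 4*((t:MvPolynomial (Fin n) ℂ)+1) * (radSq n ^t * (X i * pderiv i h))
      + radSq n ^(t+1) * pderiv i (pderiv i h) := by
    intro i _
    simp only [pderiv_mul, pderiv_pow, pd_radSq, pderiv_X_self, map_add, pd_natCast, pd_two,
      Nat.add_sub_cancel, zero_mul, mul_zero, add_zero, zero_add, mul_one]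
    push_cast
    ring
  unfold lapP
  rw [Finset.sum_congr rfl key]
  rw [Finset.sum_add_distrib, Finset.sum_add_distrib, Finset.sum_add_distrib]
  simp_rw [← Finset.mul_sum, ← Finset.sum_mul, sumXX]
  rw [Finset.sum_const, Finset.card_univ, Fintype.card_fin, euler h hhom]
  have hharm' : ∑ i : Fin n, pderiv i (pderiv i h) = 0 := hharm
  rw [hharm', mul_zero, add_zero, nsmul_eq_mul]
  have tfact : (t : MvPolynomial (Fin n) ℂ) * (radSq n * (radSq n ^(t-1) * h)) = t * (radSq n ^t * h) := by
    cases t with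
    | zero => push_cast; ring
    | succ t => rw [Nat.add_sub_cancel, pow_succ]; ring
  rw [show (4*(t:MvPolynomial (Fin n) ℂ)*((t:MvPolynomial (Fin n) ℂ)+1))
        * (radSq n * (radSq n ^(t-1) * h)) = 4*((t:MvPolynomial (Fin n) ℂ)+1)
        * ((t : MvPolynomial (Fin n) ℂ) * (radSq n * (radSq n ^(t-1) * h))) from by ring, tfact]
  rw [map_natCast (C : ℂ →+* MvPolynomial (Fin n) ℂ)]
  push_cast
  ring
end eqeigenAux

/-- equation `eqeigen`: for a homogeneous harmonic polynomial `h` of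
degree `d`, integers `s ≥ 0` and `p ≥ 1`,
`Δ^p(|x|^{2s+2p} h) = d_p(s,d) |x|^{2s} h` with
`d_p(s,d) = 2^p (s+p)⋯(s+1) (2s+2p-2+n+2d)⋯(2s+n+2d)`. -/
theorem stmt_12 (n d s p : ℕ) (hp : 1 ≤ p) (h : MvPolynomial (Fin n) ℂ)
    (hhom : h.IsHomogeneous d) (hharm : lapP h = 0) :
    lapP^[p] (radSq n ^ (s + p) * h) =
      MvPolynomial.C
        ((2 ^ p * (∏ i ∈ Finset.Icc 1 p, (s + i)) *
          ∏ i ∈ Finset.range p, (2 * s + n + 2 * d + 2 * i) : ℕ) : ℂ) *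
        (radSq n ^ s * h) := by
  clear hp
  induction p with
  | zero => simp
  | succ p ih =>
    rw [Function.iterate_succ_apply, show s + (p+1) = (s+p)+1 from rfl,
        step h hhom hharm (s+p), lap_iter_C, ih, ← mul_assoc, ← C_mul, ← Nat.cast_mul]
    congr 2
    rw [Finset.prod_Icc_succ_top (Nat.le_add_left 1 p), Finset.prod_range_succ]
    push_cast
    ring
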